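/- For virtual knot diagrams K_1 and K_2 and a fixed connected sum K_1 \sharp K_2, one has \mathcal{F}(K_1 \sharp K_2) = \mathcal{F}(K_1) \sharp F(K_2) + F(K_1) \sharp \mathcal{F}(K_2), where all connected sums are taken at the same place and \sharp is extended bilinearly to the free Z-module on flat virtual knot diagrams. -/
import Mathlib


open Finset

/-- An abstract interface for the combinatorics of virtual knot theory:
oriented virtual knot diagrams (Gauss diagrams with signed directed chords),
their real crossings, flat shadows, smoothings of crossings, and the
generalized Reidemeister moves.  Flat virtual knots and 2-component flat
virtual links appear as the types `UFlat`, `OFlat` and `Flat2` of equivalence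
classes under the flat generalized Reidemeister moves. -/
structure VKT where
  /-- Oriented virtual knot diagrams (Gauss diagrams with signed, directed chords). -/
  Diagram : Type
  /-- The real crossings (chords of the Gauss diagram) of a diagram. -/
  Crossing : Diagram → Type
  crossingFintype : ∀ D, Fintype (Crossing D)
  crossingDecEq : ∀ D, DecidableEq (Crossing D)
  /-- The sign (local writhe) of a real crossing. -/
  sign : ∀ {D}, Crossing D → ℤ
  sign_unit : ∀ {D} (c : Crossing D), sign c = 1 ∨ sign c = -1
  /-- Equivalence of diagrams generated by the generalized Reidemeister moves;
  virtual knots are the equivalence classes. -/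
  equiv : Diagram → Diagram → Prop
  /-- Unoriented flat virtual knots (classes of unoriented flat diagrams modulo
  the flat generalized Reidemeister moves); the basis of the module `𝓜₁ᵘ`. -/
  UFlat : Type
  /-- Oriented flat virtual knots. -/
  OFlat : Type
  /-- The (unoriented) shadow `F(K)` of a diagram, as an unoriented flat virtual knot. -/
  shadow : Diagram → UFlat
  /-- The oriented shadow of a diagram, as an oriented flat virtual knot. -/
  oshadow : Diagram → OFlat
  /-- The trivial (unknotted) unoriented flat virtual knot. -/
  trivialU : UFlat
  /-- The unoriented flat virtual knot `K̃_c` obtained by 0-smoothing a real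
  crossing (the smoothing preserving one component) and taking the shadow. -/
  smooth0 : ∀ {D}, Crossing D → UFlat
  /-- Oriented 2-component flat virtual links; the basis of the module `𝓜₂`. -/
  Flat2 : Type
  /-- The oriented 2-component flat virtual link `L̃_c` obtained by 1-smoothing a
  real crossing (the oriented smoothing splitting the knot into two components)
  and taking the shadow. -/
  smooth1 : ∀ {D}, Crossing D → Flat2
  /-- `F(K) ∪ U` : the shadow of `K` together with a disjoint unknotted component. -/
  shadowCupU : Diagram → Flat2
  /-- `D` is a classical knot diagram (a planar Gauss-diagram realization with no
  virtual crossings). -/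
  IsClassical : Diagram → Prop
  /-- `R1 D D' c e` : `D'` is obtained from `D` by a first Reidemeister move creating
  the real crossing `c`; `e` identifies the crossings of `D` with the remaining
  (uninvolved) crossings of `D'`. -/
  R1 : ∀ (D D' : Diagram) (_c : Crossing D'), (Crossing D → Crossing D') → Prop
  /-- `R2 D D' c₁ c₂ e` : `D'` is obtained from `D` by a second Reidemeister move
  creating the real crossings `c₁, c₂`; `e` identifies the uninvolved crossings. -/
  R2 : ∀ (D D' : Diagram) (_c₁ _c₂ : Crossing D'), (Crossing D → Crossing D') → Prop
  /-- `R3 D D' c₁ c₂ c₃ c₁' c₂' c₃' e` : `D` and `D'` are related by a third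
  Reidemeister move whose three involved crossings `c₁, c₂, c₃` of `D` correspond
  to `c₁', c₂', c₃'` of `D'`; `e` identifies all the crossings of `D` with those
  of `D'`. -/
  R3 : ∀ (D D' : Diagram) (_c₁ _c₂ _c₃ : Crossing D) (_c₁' _c₂' _c₃' : Crossing D'),
      (Crossing D → Crossing D') → Prop
  /-- `Detour D D' e` : `D` and `D'` are related by a detour move (a purely virtual
  Reidemeister move or the mixed move `Ω₃ᵛ`), which involves no real crossing;
  `e` is the canonical identification of the real crossings. -/
  Detour : ∀ (D D' : Diagram), (Crossing D ≃ Crossing D') → Prop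
  /-- The crossing change (switch of over/under information) at a real crossing. -/
  switch : ∀ (D : Diagram), Crossing D → Diagram
  /-- The canonical identification of the crossings of `D` with those of `switch D c`. -/
  switchEquiv : ∀ (D : Diagram) (c : Crossing D), Crossing D ≃ Crossing (switch D c)
  /-- `r(K)` : reversing the orientation of a diagram. -/
  rev : Diagram → Diagram
  /-- The canonical identification of crossings under orientation reversal. -/
  revEquiv : ∀ D, Crossing D ≃ Crossing (rev D)
  /-- `m(K)` : switching all real crossings of a diagram. -/
  mir : Diagram → Diagram
  /-- The canonical identification of crossings under `mir`. -/
  mirEquiv : ∀ D, Crossing D ≃ Crossing (mir D)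
  /-- Reversing the orientation of an oriented 2-component flat virtual link. -/
  rev2 : Flat2 → Flat2
  /-- The index `Ind(c)` of a real crossing: the signed count of chords linking the
  chord `c` in the Gauss diagram (signs of chords whose arrowhead lies on the arc
  from the head of `c` to its tail, minus the signs of those on the other arc). -/
  Ind : ∀ {D}, Crossing D → ℤ
  /-- The flat linking number of a 2-component flat virtual link. -/
  lk2 : Flat2 → ℕ
  /-- Direction-decorated Gauss diagrams: directed chords without signs. -/
  GaussDir : Type
  /-- The underlying direction-decorated Gauss diagram of a virtual knot diagram
  (forget the signs of the chords and the planar realization). -/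
  gauss : Diagram → GaussDir
  /-- All real crossings of the diagram are positive. -/
  IsPositive : Diagram → Prop
  /-- Flat virtual knot diagrams. -/
  FDiagram : Type
  /-- The flat crossings of a flat virtual knot diagram. -/
  fCrossing : FDiagram → Type
  fFintype : ∀ F, Fintype (fCrossing F)
  /-- The index of a flat crossing, computed in the all-positive virtual knot
  diagram lying over the flat diagram. -/
  fInd : ∀ {F}, fCrossing F → ℤ
  /-- Equivalence of flat diagrams under the flat generalized Reidemeister moves. -/
  fEquiv : FDiagram → FDiagram → Prop
  /-- The shadow of a virtual knot diagram, as a flat diagram (`D` overlies `forget D`). -/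
  forget : Diagram → FDiagram
  /-- The flat virtual knot represented by a flat diagram. -/
  fclass : FDiagram → UFlat
  /-- The connected sum of two diagrams, performed at a fixed chosen place. -/
  csum : Diagram → Diagram → Diagram
  /-- The connected sum of flat virtual knots, performed at the same fixed place. -/
  csumU : UFlat → UFlat → UFlat
  /-- The identification of the crossings of a connected sum with the disjoint
  union of the crossings of the two summands. -/
  csumEquiv : ∀ D₁ D₂, (Crossing D₁ ⊕ Crossing D₂) ≃ Crossing (csum D₁ D₂)

attribute [instance] VKT.crossingFintype VKT.crossingDecEq VKT.fFintype

namespace VKT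

variable (T : VKT)

/-- The writhe `w(K)` of a diagram: the sum of the signs of its real crossings. -/
def writhe (D : T.Diagram) : ℤ := ∑ c : T.Crossing D, T.sign c

/-- The invariant `𝓕(K) = ∑_c w(c)·K̃_c − w(K)·F(K)`, an element of the free
ℤ-module `𝓜₁ᵘ` on unoriented flat virtual knots. -/
noncomputable def Fcal (D : T.Diagram) : T.UFlat →₀ ℤ :=
  (∑ c : T.Crossing D, T.sign c • Finsupp.single (T.smooth0 c) (1 : ℤ))
    - T.writhe D • Finsupp.single (T.shadow D) (1 : ℤ)

/-- The invariant `𝓛(K) = ∑_c w(c)·L̃_c − w(K)·(F(K) ∪ U)`, an element of the free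
ℤ-module `𝓜₂` on oriented 2-component flat virtual links. -/
noncomputable def Lcal (D : T.Diagram) : T.Flat2 →₀ ℤ :=
  (∑ c : T.Crossing D, T.sign c • Finsupp.single (T.smooth1 c) (1 : ℤ))
    - T.writhe D • Finsupp.single (T.shadowCupU D) (1 : ℤ)

/-- The writhe `w(K̃) = ∑_c sgn(Ind(c))` of a flat virtual knot diagram. -/
def wflat (F : T.FDiagram) : ℤ := ∑ c : T.fCrossing F, (T.fInd c).sign

end VKT

/-- For a connected sum `K₁ ♯ K₂` taken at a fixed place,
`𝓕(K₁ ♯ K₂) = 𝓕(K₁) ♯ F(K₂) + F(K₁) ♯ 𝓕(K₂)`, where `♯` is extended bilinearly to the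
free ℤ-module on (unoriented) flat virtual knots, all connected sums being taken at
the same place.  (The hypotheses record the behaviour of signs, smoothings and
shadows under connected sum.) -/
theorem Fcal_connected_sum (T : VKT) (D₁ D₂ : T.Diagram)
    (hs₁ : ∀ c : T.Crossing D₁, T.sign (T.csumEquiv D₁ D₂ (Sum.inl c)) = T.sign c)
    (hs₂ : ∀ c : T.Crossing D₂, T.sign (T.csumEquiv D₁ D₂ (Sum.inr c)) = T.sign c)
    (hm₁ : ∀ c : T.Crossing D₁,
      T.smooth0 (T.csumEquiv D₁ D₂ (Sum.inl c)) = T.csumU (T.smooth0 c) (T.shadow D₂))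
    (hm₂ : ∀ c : T.Crossing D₂,
      T.smooth0 (T.csumEquiv D₁ D₂ (Sum.inr c)) = T.csumU (T.shadow D₁) (T.smooth0 c))
    (hsh : T.shadow (T.csum D₁ D₂) = T.csumU (T.shadow D₁) (T.shadow D₂)) :
    T.Fcal (T.csum D₁ D₂) =
      (T.Fcal D₁).sum (fun x m => m • Finsupp.single (T.csumU x (T.shadow D₂)) (1 : ℤ))
        + (T.Fcal D₂).sum (fun y n =>
            n • Finsupp.single (T.csumU (T.shadow D₁) y) (1 : ℤ)) := by
  classical
  have key : ∀ (g : T.UFlat → T.UFlat) (f : T.UFlat →₀ ℤ),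
      f.sum (fun x m => m • Finsupp.single (g x) (1 : ℤ)) = Finsupp.mapDomain g f := by
    intro g f
    rw [Finsupp.mapDomain]
    congr 1
    ext x m
    rw [Finsupp.smul_single, smul_eq_mul, mul_one]
  rw [key, key]
  have hmd : ∀ (g : T.UFlat → T.UFlat) (D : T.Diagram),
      Finsupp.mapDomain g (T.Fcal D)
        = (∑ c : T.Crossing D, T.sign c • Finsupp.single (g (T.smooth0 c)) (1 : ℤ))
          - T.writhe D • Finsupp.single (g (T.shadow D)) (1 : ℤ) := by
    intro g D
    rw [VKT.Fcal, show Finsupp.mapDomain g = ⇑(Finsupp.lmapDomain ℤ ℤ g) from rfl,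
      map_sub, map_sum, map_smul]
    simp only [Finsupp.lmapDomain_apply, map_smul, Finsupp.mapDomain_single]
  rw [hmd, hmd]
  have hw : T.writhe (T.csum D₁ D₂) = T.writhe D₁ + T.writhe D₂ := by
    rw [VKT.writhe, ← Equiv.sum_comp (T.csumEquiv D₁ D₂) (fun c => T.sign c),
      Fintype.sum_sum_type]
    simp only [hs₁, hs₂]
    rfl
  have hsum : (∑ c : T.Crossing (T.csum D₁ D₂),
        T.sign c • Finsupp.single (T.smooth0 c) (1 : ℤ))
      = (∑ c : T.Crossing D₁,
          T.sign c • Finsupp.single (T.csumU (T.smooth0 c) (T.shadow D₂)) (1 : ℤ))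
        + (∑ c : T.Crossing D₂,
          T.sign c • Finsupp.single (T.csumU (T.shadow D₁) (T.smooth0 c)) (1 : ℤ)) := by
    rw [← Equiv.sum_comp (T.csumEquiv D₁ D₂)
        (fun c => T.sign c • Finsupp.single (T.smooth0 c) (1 : ℤ)),
      Fintype.sum_sum_type]
    simp only [hs₁, hs₂, hm₁, hm₂]
  rw [VKT.Fcal, hsum, hw, hsh]
  abel_nf
  rw [add_smul]
  abel
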